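/- arXiv:1011.3198 — 2 statements merged into one kernel-verified Lean document; each statement's English description precedes it below -/
import Mathlib

section
/- Let N ≥ 2 be an integer and let z = 1/N − 2πiα for α ∈ [−1/2, 1/2]. Then uniformly for every integer n with 1 ≤ n ≤ N, ∫_{−1/2}^{1/2} e(−nα)/z² dα = n e^{−n/N} + O(1), with an absolute implied constant. -/
open MeasureTheory Real Complex Filter Set
open scoped FourierTransform RealInnerProductSpace

lemma laplace_integrable {w : ℂ} (hw : 0 < w.re) :
    IntegrableOn (fun t : ℝ => (t : ℂ) * Complex.exp (-(w * t))) (Ioi (0:ℝ)) := by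
  have hbound : IntegrableOn (fun t : ℝ => t * Real.exp (-(w.re * t))) (Ioi (0:ℝ)) := by
    have := integrableOn_rpow_mul_exp_neg_mul_rpow (s := 1) (p := 1) (b := w.re)
      (by norm_num) (by norm_num) hw
    simpa [Real.rpow_one] using this
  refine hbound.integrable.mono' ?_ ?_
  · exact (Complex.continuous_ofReal.mul
      (Complex.continuous_exp.comp (by fun_prop))).aestronglyMeasurable
  · filter_upwards [ae_restrict_mem measurableSet_Ioi] with t ht
    have ht' : (0:ℝ) < t := ht
    rw [norm_mul, Complex.norm_exp]
    have : (-(w * (t:ℂ))).re = -(w.re * t) := by simp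
    rw [this]
    simp [abs_of_pos ht', le_refl]

lemma laplace_integral {w : ℂ} (hw : 0 < w.re) :
    ∫ t in Ioi (0:ℝ), (t : ℂ) * Complex.exp (-(w * t)) = 1 / w ^ 2 := by
  have hw0 : w ≠ 0 := fun h => by simp [h] at hw
  have hderiv : ∀ t ∈ Ici (0:ℝ),
      HasDerivAt (fun t : ℝ => -(((t:ℂ) / w + 1 / w ^ 2) * Complex.exp (-(w * t))))
        ((t : ℂ) * Complex.exp (-(w * t))) t := by
    intro t _
    have h1 : HasDerivAt (fun t : ℝ => ((t:ℂ) / w + 1 / w ^ 2)) (1 / w) t := by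
      simpa [one_div] using
        ((Complex.ofRealCLM.hasDerivAt (x := t)).div_const w).add_const ((w^2)⁻¹)
    have h2 : HasDerivAt (fun t : ℝ => Complex.exp (-(w * t)))
        (-w * Complex.exp (-(w * t))) t := by
      have : HasDerivAt (fun t : ℝ => -(w * (t:ℂ))) (-w) t := by
        simpa [Pi.neg_def] using ((Complex.ofRealCLM.hasDerivAt (x := t)).const_mul w).neg
      simpa [mul_comm] using this.cexp
    have : HasDerivAt (fun t : ℝ => -(((t:ℂ) / w + 1 / w ^ 2) * Complex.exp (-(w * t)))) _ t := (h1.mul h2).neg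
    convert this using 1
    have hinv : w * w⁻¹ = 1 := mul_inv_cancel₀ hw0
    linear_combination (-((t:ℂ) * Complex.exp (-(w * t))) - Complex.exp (-(w * t)) * w⁻¹) * hinv
  have htend : Tendsto (fun t : ℝ => -(((t:ℂ) / w + 1 / w ^ 2) * Complex.exp (-(w * t))))
      atTop (nhds 0) := by
    apply squeeze_zero_norm'
      (a := fun t : ℝ => (t / ‖w‖ + 1 / ‖w‖ ^ 2) * Real.exp (-(w.re * t)))
    · filter_upwards [eventually_ge_atTop (0:ℝ)] with t ht
      rw [norm_neg, norm_mul, Complex.norm_exp]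
      have : (-(w * (t:ℂ))).re = -(w.re * t) := by simp
      rw [this]
      gcongr
      calc ‖(t:ℂ) / w + 1 / w ^ 2‖ ≤ ‖(t:ℂ) / w‖ + ‖1 / w ^ 2‖ := norm_add_le _ _
        _ = t / ‖w‖ + 1 / ‖w‖ ^ 2 := by
            rw [norm_div, norm_div, norm_pow, norm_one, Complex.norm_real,
              Real.norm_eq_abs, _root_.abs_of_nonneg ht]
    · have hA : Tendsto (fun t : ℝ => t / ‖w‖ * Real.exp (-(w.re * t))) atTop (nhds 0) := by
        have := tendsto_rpow_mul_exp_neg_mul_atTop_nhds_zero 1 w.re hw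
        have h2 := this.div_const ‖w‖
        simp only [Real.rpow_one, zero_div] at h2
        refine h2.congr fun t => by ring
      have hB : Tendsto (fun t : ℝ => 1 / ‖w‖ ^ 2 * Real.exp (-(w.re * t))) atTop (nhds 0) := by
        have hmul : Tendsto (fun t : ℝ => w.re * t) atTop atTop :=
          Tendsto.const_mul_atTop hw tendsto_id
        have : Tendsto (fun t : ℝ => Real.exp (-(w.re * t))) atTop (nhds 0) :=
          Real.tendsto_exp_atBot.comp (tendsto_neg_atTop_atBot.comp hmul)
        have h3 := this.const_mul (1 / ‖w‖ ^ 2)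
        rw [mul_zero] at h3
        exact h3
      have := hA.add hB
      simpa [add_mul] using this
  have := integral_Ioi_of_hasDerivAt_of_tendsto' (a := 0) (m := 0)
    (fun t ht => hderiv t ht) (laplace_integrable hw) htend
  rw [this]
  simp

noncomputable def oneSided (a : ℝ) : ℝ → ℂ :=
  Set.indicator (Ici (0:ℝ)) (fun t => (t : ℂ) * Complex.exp (-((a:ℂ) * t)))

lemma re_aux (a α : ℝ) : (((a:ℂ) + 2 * π * Complex.I * α)).re = a := by simp

lemma fourier_oneSided {a : ℝ} (ha : 0 < a) (α : ℝ) :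
    𝓕 (oneSided a) α = 1 / ((a:ℂ) + 2 * π * Complex.I * α) ^ 2 := by
  rw [Real.fourier_eq']
  have h1 : ∀ v : ℝ, Complex.exp ((↑(-2 * π * ⟪v, α⟫) * Complex.I)) • oneSided a v
      = Set.indicator (Ici (0:ℝ))
        (fun t => (t:ℂ) * Complex.exp (-(((a:ℂ) + 2 * π * Complex.I * α) * t))) v := by
    intro v
    simp only [oneSided, Set.indicator_apply, RCLike.inner_apply, starRingEnd_apply, star_trivial]
    split_ifs with h
    · rw [smul_eq_mul, ← mul_assoc, mul_comm (Complex.exp _) ((v:ℂ)), mul_assoc,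
        ← Complex.exp_add]
      congr 2
      push_cast
      ring
    · simp
  rw [integral_congr_ae (Eventually.of_forall h1), integral_indicator measurableSet_Ici,
    integral_Ici_eq_integral_Ioi, laplace_integral (by rw [re_aux]; exact ha)]

lemma norm_sq_aux (a α : ℝ) : ‖((a:ℂ) + 2 * π * Complex.I * α)‖ ^ 2 = a ^ 2 + (2 * π * α) ^ 2 := by
  rw [Complex.sq_norm, Complex.normSq_apply]
  simp
  ring

lemma norm_g (a α : ℝ) : ‖1 / ((a:ℂ) + 2 * π * Complex.I * α) ^ 2‖
    = (a ^ 2 + (2 * π * α) ^ 2)⁻¹ := by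
  rw [norm_div, norm_one, norm_pow, norm_sq_aux, one_div]

lemma ne_zero_aux {a : ℝ} (ha : 0 < a) (α : ℝ) : ((a:ℂ) + 2 * π * Complex.I * α) ≠ 0 := by
  intro h
  have h2 : ((a:ℂ) + 2 * π * Complex.I * α).re = 0 := by rw [h]; simp
  rw [re_aux] at h2
  exact ha.ne' h2

lemma g_integrable {a : ℝ} (ha : 0 < a) (ha1 : a ≤ 1) :
    Integrable (fun α : ℝ => 1 / ((a:ℂ) + 2 * π * Complex.I * α) ^ 2) := by
  have hcont : Continuous fun α : ℝ => 1 / ((a:ℂ) + 2 * π * Complex.I * α) ^ 2 := by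
    apply Continuous.div continuous_const (by fun_prop)
    exact fun α => pow_ne_zero _ (ne_zero_aux ha α)
  refine ((integrable_inv_one_add_sq).const_mul (a ^ 2)⁻¹).mono'
    hcont.aestronglyMeasurable ?_
  filter_upwards with α
  rw [norm_g]
  calc (a ^ 2 + (2 * π * α) ^ 2)⁻¹ ≤ (a ^ 2 * (1 + α ^ 2))⁻¹ := by
        apply inv_anti₀ (by positivity)
        have h1 : a ^ 2 ≤ 1 := by nlinarith
        have h2 : (1:ℝ) ≤ 4 * π ^ 2 := by nlinarith [Real.pi_gt_three]
        have h3 : a ^ 2 * α ^ 2 ≤ 4 * π ^ 2 * α ^ 2 := by nlinarith [sq_nonneg α]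
        nlinarith [sq_nonneg α]
    _ = (a ^ 2)⁻¹ * (1 + α ^ 2)⁻¹ := by rw [mul_inv]

lemma oneSided_integrable {a : ℝ} (ha : 0 < a) : Integrable (oneSided a) := by
  rw [oneSided, integrable_indicator_iff measurableSet_Ici]
  have h2 : IntegrableOn (fun t : ℝ => (t:ℂ) * Complex.exp (-((a:ℂ) * t))) (Ici (0:ℝ)) := by
    rw [integrableOn_Ici_iff_integrableOn_Ioi]
    exact laplace_integrable (w := (a:ℂ)) (by simpa using ha)
  exact h2

lemma main_identity {a : ℝ} (ha : 0 < a) (ha1 : a ≤ 1) {n : ℝ} (hn : 0 < n) :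
    ∫ α : ℝ, Complex.exp ((↑(2 * π * (α * n)) * Complex.I)) •
        (1 / ((a:ℂ) + 2 * π * Complex.I * α) ^ 2)
      = (n:ℂ) * Real.exp (-(a * n)) := by
  have hFT : 𝓕 (oneSided a) = fun α : ℝ => 1 / ((a:ℂ) + 2 * π * Complex.I * α) ^ 2 :=
    funext fun α => fourier_oneSided ha α
  have hcont : ContinuousAt (oneSided a) n := by
    have hc : Continuous (fun t : ℝ => (t : ℂ) * Complex.exp (-((a:ℂ) * t))) := by fun_prop
    apply hc.continuousAt.congr
    filter_upwards [Ioi_mem_nhds hn] with t ht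
    exact (Set.indicator_of_mem (Set.mem_Ici.mpr (le_of_lt ht))
      (fun t : ℝ => (t : ℂ) * Complex.exp (-((a:ℂ) * t)))).symm
  have hinv := (oneSided_integrable ha).fourierInv_fourier_eq
    (h'f := by rw [hFT]; exact g_integrable ha ha1) hcont
  rw [Real.fourierInv_eq'] at hinv
  have h2 : ∀ α : ℝ, Complex.exp ((↑(2 * π * ⟪α, n⟫) * Complex.I)) • 𝓕 (oneSided a) α
      = Complex.exp ((↑(2 * π * (α * n)) * Complex.I)) •
        (1 / ((a:ℂ) + 2 * π * Complex.I * α) ^ 2) := by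
    intro α
    rw [hFT]
    simp [RCLike.inner_apply, mul_comm (n:ℂ) (α:ℂ)]
  rw [integral_congr_ae (Eventually.of_forall h2)] at hinv
  rw [hinv, oneSided, Set.indicator_of_mem (show n ∈ Ici (0:ℝ) from hn.le)]
  rw [Complex.ofReal_exp]
  push_cast
  ring_nf

lemma rpow_neg_two_eq {x : ℝ} (hx : 0 < x) : x ^ (-2:ℝ) = (x ^ 2)⁻¹ := by
  rw [show (-2:ℝ) = -((2:ℕ):ℝ) by norm_num, Real.rpow_neg hx.le, Real.rpow_natCast]

lemma tail_ptwise {a x : ℝ} (ha : 0 < a) (hx : (1/2:ℝ) < x) :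
    (a ^ 2 + (2 * π * x) ^ 2)⁻¹ ≤ (4 * π ^ 2)⁻¹ * x ^ (-2:ℝ) := by
  have hx' : (0:ℝ) < x := lt_trans (by norm_num) hx
  rw [rpow_neg_two_eq hx', ← mul_inv]
  apply inv_anti₀ (by positivity)
  nlinarith [sq_nonneg a]

lemma tail_est {a : ℝ} (ha : 0 < a) :
    ∫ x in Ioi (1/2 : ℝ), (a ^ 2 + (2 * π * x) ^ 2)⁻¹ ≤ 1 / 2 := by
  have hpi : (1:ℝ) ≤ π := by nlinarith [Real.pi_gt_three]
  have hbint : IntegrableOn (fun x : ℝ => (4 * π ^ 2)⁻¹ * x ^ (-2:ℝ)) (Ioi (1/2:ℝ)) :=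
    (integrableOn_Ioi_rpow_of_lt (by norm_num) (by norm_num)).const_mul _
  have hcont : Continuous (fun x : ℝ => (a ^ 2 + (2 * π * x) ^ 2)⁻¹) := by
    apply Continuous.inv₀ (by fun_prop)
    intro x; positivity
  have hintg : IntegrableOn (fun x : ℝ => (a ^ 2 + (2 * π * x) ^ 2)⁻¹) (Ioi (1/2:ℝ)) := by
    apply hbint.mono' hcont.aestronglyMeasurable
    filter_upwards [ae_restrict_mem measurableSet_Ioi] with x hx
    rw [Real.norm_eq_abs, _root_.abs_of_nonneg (by positivity)]
    exact tail_ptwise ha hx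
  calc ∫ x in Ioi (1/2 : ℝ), (a ^ 2 + (2 * π * x) ^ 2)⁻¹
      ≤ ∫ x in Ioi (1/2 : ℝ), (4 * π ^ 2)⁻¹ * x ^ (-2:ℝ) :=
        setIntegral_mono_on hintg hbint measurableSet_Ioi fun x hx => tail_ptwise ha hx
    _ = (4 * π ^ 2)⁻¹ * 2 := by
        rw [integral_const_mul, integral_Ioi_rpow_of_lt (by norm_num) (by norm_num)]
        norm_num [show ((-2:ℝ)+1) = -1 from by norm_num, Real.rpow_neg_one]
    _ ≤ 1 / 2 := by
        have h4 : (π ^ 2)⁻¹ ≤ 1 := inv_le_one_of_one_le₀ (by nlinarith)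
        rw [show (4 * π ^ 2)⁻¹ * 2 = (π ^ 2)⁻¹ / 2 by rw [mul_inv]; ring]
        linarith


/-- `z = 1/N - 2πiα`. -/
noncomputable def zOf (N : ℕ) (α : ℝ) : ℂ :=
  1 / (N : ℂ) - 2 * (Real.pi : ℂ) * Complex.I * (α : ℂ)

theorem residue_integral :
    ∃ C : ℝ, 0 < C ∧ ∀ N : ℕ, 2 ≤ N → ∀ n : ℕ, 1 ≤ n → n ≤ N →
      ‖(∫ α in (-(1/2 : ℝ))..(1/2 : ℝ),
          Complex.exp (-(2 * (Real.pi : ℂ) * Complex.I * (n : ℂ) * (α : ℂ))) / zOf N α ^ 2) -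
        ((n : ℂ) * Real.exp (-(n : ℝ) / N))‖ ≤ C := by
  refine ⟨1, one_pos, ?_⟩
  intro N hN n hn hnN
  have hN0 : (0:ℝ) < N := by
    have : (2:ℝ) ≤ N := by exact_mod_cast hN
    linarith
  set a : ℝ := 1 / N with ha_def
  have ha : 0 < a := by positivity
  have ha1 : a ≤ 1 := by
    rw [ha_def, div_le_one hN0]
    have : (2:ℝ) ≤ N := by exact_mod_cast hN
    linarith
  have hn0 : (0:ℝ) < n := by exact_mod_cast hn
  set g : ℝ → ℂ := fun α => 1 / ((a:ℂ) + 2 * π * Complex.I * α) ^ 2 with hg_def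
  set h : ℝ → ℂ := fun α => Complex.exp ((↑(2 * π * (α * (n:ℝ))) * Complex.I)) • g α with hh_def
  have hint : Integrable h := by
    have := (g_integrable ha ha1).bdd_mul
      (f := fun α : ℝ => Complex.exp ((↑(2 * π * (α * (n:ℝ))) * Complex.I)))
      ((Complex.continuous_exp.comp (by fun_prop)).aestronglyMeasurable) (c := 1) (Eventually.of_forall fun x => by
        rw [Complex.norm_exp]; simp)
    exact this.congr (Eventually.of_forall fun x => by
      simp only [hh_def, hg_def, smul_eq_mul])
  have hnorm : ∀ x : ℝ, ‖h x‖ = (a ^ 2 + (2 * π * x) ^ 2)⁻¹ := by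
    intro x
    simp only [hh_def, hg_def, norm_smul]
    rw [norm_g a x, Complex.norm_exp]
    have hre : ((↑(2 * π * (x * (n:ℝ))) : ℂ) * Complex.I).re = 0 := by simp
    rw [hre, Real.exp_zero, one_mul]
  have hmain : ∫ α : ℝ, h α = (n:ℂ) * Real.exp (-(a * n)) := main_identity ha ha1 hn0
  -- rewrite the target integral as the middle piece of ∫ h
  have hrw : (∫ α in (-(1/2 : ℝ))..(1/2 : ℝ),
        Complex.exp (-(2 * (π:ℂ) * Complex.I * (n : ℂ) * (α : ℂ))) / zOf N α ^ 2)
      = ∫ α in (-(1/2 : ℝ))..(1/2 : ℝ), h (-α) := by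
    apply intervalIntegral.integral_congr
    intro α _
    rw [hh_def, hg_def]
    simp only [smul_eq_mul]
    rw [div_eq_mul_one_div]
    congr 2
    · push_cast
      ring
    · rw [zOf, ha_def]
      push_cast
      ring
  have hcompneg : (∫ α in (-(1/2 : ℝ))..(1/2 : ℝ), h (-α)) = ∫ α in (-(1/2 : ℝ))..(1/2 : ℝ), h α := by
    rw [intervalIntegral.integral_comp_neg]
    norm_num
  have hmid : (∫ α in (-(1/2 : ℝ))..(1/2 : ℝ), h α) = ∫ α in Ioc (-(1/2:ℝ)) (1/2:ℝ), h α :=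
    intervalIntegral.integral_of_le (by norm_num)
  have hsplit1 : (∫ α in Iic (-(1/2:ℝ)), h α) + (∫ α in Ioc (-(1/2:ℝ)) (1/2:ℝ), h α)
      = ∫ α in Iic (1/2:ℝ), h α := by
    rw [← setIntegral_union (Iic_disjoint_Ioc le_rfl) measurableSet_Ioc
      hint.integrableOn hint.integrableOn, Iic_union_Ioc_eq_Iic (by norm_num : -(1/2:ℝ) ≤ 1/2)]
  have hsplit2 : (∫ α in Iic (1/2:ℝ), h α) + (∫ α in Ioi (1/2:ℝ), h α) = ∫ α : ℝ, h α :=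
    intervalIntegral.integral_Iic_add_Ioi hint.integrableOn hint.integrableOn
  -- tail bounds
  have hT2 : ‖∫ α in Ioi (1/2:ℝ), h α‖ ≤ 1/2 := by
    calc ‖∫ α in Ioi (1/2:ℝ), h α‖ ≤ ∫ α in Ioi (1/2:ℝ), ‖h α‖ :=
          norm_integral_le_integral_norm _
      _ = ∫ α in Ioi (1/2:ℝ), (a ^ 2 + (2 * π * α) ^ 2)⁻¹ := by
          apply integral_congr_ae (Eventually.of_forall fun x => hnorm x)
      _ ≤ 1/2 := tail_est ha
  have hT1 : ‖∫ α in Iic (-(1/2:ℝ)), h α‖ ≤ 1/2 := by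
    calc ‖∫ α in Iic (-(1/2:ℝ)), h α‖ ≤ ∫ α in Iic (-(1/2:ℝ)), ‖h α‖ :=
          norm_integral_le_integral_norm _
      _ = ∫ α in Ioi (1/2:ℝ), ‖h (-α)‖ := (integral_comp_neg_Ioi (1/2:ℝ) (fun α => ‖h α‖)).symm
      _ = ∫ α in Ioi (1/2:ℝ), (a ^ 2 + (2 * π * α) ^ 2)⁻¹ := by
          apply integral_congr_ae (Eventually.of_forall fun x => ?_)
          rw [hnorm (-x)]
          ring_nf
      _ ≤ 1/2 := tail_est ha
  -- assemble
  have hexp : ((n : ℂ) * Real.exp (-(n : ℝ) / N)) = (n:ℂ) * Real.exp (-(a * n)) := by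
    rw [ha_def]
    norm_num
    left
    congr 1
    ring
  rw [hrw, hcompneg, hmid, hexp]
  have : (∫ α in Ioc (-(1/2:ℝ)) (1/2:ℝ), h α) - (n:ℂ) * Real.exp (-(a * n))
      = -((∫ α in Iic (-(1/2:ℝ)), h α) + (∫ α in Ioi (1/2:ℝ), h α)) := by
    rw [← hmain, ← hsplit2, ← hsplit1]
    ring
  rw [this, norm_neg]
  calc ‖(∫ α in Iic (-(1/2:ℝ)), h α) + (∫ α in Ioi (1/2:ℝ), h α)‖
      ≤ ‖∫ α in Iic (-(1/2:ℝ)), h α‖ + ‖∫ α in Ioi (1/2:ℝ), h α‖ := norm_add_le _ _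
    _ ≤ 1/2 + 1/2 := add_le_add hT1 hT2
    _ = 1 := by norm_num
end

section
/- Let N ≥ 2 be an integer and let y be an integer with 1 ≤ y ≤ N. Then ∫_{−1/2}^{1/2} T(y; −α)/z² dα = ∑_{n=1}^{y} n e^{−n/N} + O(y), where z = 1/N − 2πiα, with an absolute implied constant. -/
open Finset

/-- `T(y; α) = ∑_{n=1}^{y} e(nα)`. -/
noncomputable def T (y : ℕ) (α : ℝ) : ℂ :=
  ∑ n ∈ Finset.Icc 1 y, Complex.exp (2 * (Real.pi : ℂ) * Complex.I * (n : ℂ) * (α : ℂ))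

open MeasureTheory Set Filter
open scoped Real FourierTransform RealInnerProductSpace

lemma integrableOn_mul_exp (c : ℂ) (hc : 0 < c.re) :
    IntegrableOn (fun x : ℝ => (x : ℂ) * Complex.exp (-(c * x))) (Set.Ioi 0) := by
  have h := integrableOn_rpow_mul_exp_neg_mul_rpow (p := 1) (s := 1) (b := c.re)
    (by norm_num) (by norm_num) hc
  refine h.integrable.mono' ?_ ?_
  · exact (Complex.continuous_ofReal.mul
      (Complex.continuous_exp.comp (by continuity))).aestronglyMeasurable
  · filter_upwards [ae_restrict_mem measurableSet_Ioi] with x hx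
    have hx0 : (0:ℝ) < x := hx
    have : (-(c * x)).re = -c.re * x := by simp [Complex.mul_re]
    simp only [norm_mul, Complex.norm_exp, Complex.norm_real, Real.norm_eq_abs, this,
      Real.rpow_one, abs_of_pos hx0, le_refl]

lemma integral_mul_exp (c : ℂ) (hc : 0 < c.re) :
    ∫ x in Set.Ioi (0:ℝ), (x : ℂ) * Complex.exp (-(c * x)) = 1 / c ^ 2 := by
  have hc0 : c ≠ 0 := fun h => by simp [h] at hc
  have hderiv : ∀ x ∈ Set.Ioi (0:ℝ),
      HasDerivAt (fun x : ℝ => -(((x:ℂ) / c + 1 / c ^ 2) * Complex.exp (-(c * x))))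
        ((x : ℂ) * Complex.exp (-(c * x))) x := by
    intro x _
    have h1 : HasDerivAt (fun x : ℝ => ((x:ℂ) / c + 1 / c ^ 2)) (1 / c) x := by
      simpa [one_div] using ((hasDerivAt_id x).ofReal_comp.div_const c).add_const (c^2)⁻¹
    have h2 : HasDerivAt (fun x : ℝ => Complex.exp (-(c * x)))
        (Complex.exp (-(c * x)) * (-c)) x := by
      simpa using (((hasDerivAt_id x).ofReal_comp.const_mul c).neg).cexp
    have := (h1.mul h2).neg
    refine this.congr_deriv ?_
    field_simp
    ring
  have htends : Tendsto (fun x : ℝ => -(((x:ℂ) / c + 1 / c ^ 2) * Complex.exp (-(c * x))))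
      atTop (nhds 0) := by
    apply squeeze_zero_norm' (a := fun x : ℝ =>
      (x * ‖1/c‖ + ‖1/(c^2)‖) * Real.exp (-c.re * x)) (f := _)
    · filter_upwards [eventually_ge_atTop (0:ℝ)] with x hx
      have hre : (-(c * x)).re = -c.re * x := by simp [Complex.mul_re]
      simp only [norm_neg, norm_mul, Complex.norm_exp, hre]
      gcongr
      calc ‖(x:ℂ)/c + 1/c^2‖ ≤ ‖(x:ℂ)/c‖ + ‖1/c^2‖ :=
            norm_add_le _ _
        _ = x * ‖1/c‖ + ‖1/(c^2)‖ := by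
            simp [div_eq_mul_inv, map_mul, Complex.norm_real, abs_of_nonneg hx]
    · have A : Tendsto (fun x : ℝ => x * Real.exp (-c.re * x)) atTop (nhds 0) := by
        have := tendsto_rpow_mul_exp_neg_mul_atTop_nhds_zero 1 c.re hc
        apply this.congr'
        filter_upwards [eventually_gt_atTop (0:ℝ)] with x hx
        rw [Real.rpow_one]
      have B : Tendsto (fun x : ℝ => Real.exp (-c.re * x)) atTop (nhds 0) := by
        have := tendsto_rpow_mul_exp_neg_mul_atTop_nhds_zero 0 c.re hc
        apply this.congr'
        filter_upwards [eventually_gt_atTop (0:ℝ)] with x hx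
        rw [Real.rpow_zero, one_mul]
      have := ((A.const_mul ‖1/c‖).add (B.const_mul ‖1/(c^2)‖))
      simp only [mul_zero, add_zero, zero_add] at this
      convert this using 2 with x
      ring
  have key := integral_Ioi_of_hasDerivAt_of_tendsto
    (f := fun x : ℝ => -(((x:ℂ) / c + 1 / c ^ 2) * Complex.exp (-(c * x))))
    (f' := fun x : ℝ => (x : ℂ) * Complex.exp (-(c * x))) (a := 0)
    (Continuous.continuousWithinAt (by fun_prop)) hderiv (integrableOn_mul_exp c hc) htends
  rw [key]
  simp

lemma zOf_re (N : ℕ) (α : ℝ) : (zOf N α).re = 1 / N := by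
  simp [zOf]

lemma zOf_im (N : ℕ) (α : ℝ) : (zOf N α).im = -(2 * Real.pi * α) := by
  simp [zOf]

lemma norm_zOf_sq (N : ℕ) (α : ℝ) : ‖zOf N α‖ ^ 2 = (1/N)^2 + (2 * Real.pi * α)^2 := by
  rw [Complex.sq_norm, Complex.normSq_apply, zOf_re, zOf_im]
  ring

lemma norm_inv_zOf_sq (N : ℕ) (α : ℝ) :
    ‖1 / (zOf N α)^2‖ = ((1/N)^2 + (2 * Real.pi * α)^2)⁻¹ := by
  rw [norm_div, norm_one, norm_pow, norm_zOf_sq, one_div]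

lemma zOf_ne (N : ℕ) (hN : 1 ≤ N) (α : ℝ) : zOf N α ≠ 0 := by
  intro h
  have h1 := zOf_re N α
  rw [h] at h1
  have h2 : (0:ℝ) < 1 / N := by
    have : (0:ℝ) < N := by exact_mod_cast Nat.pos_of_ne_zero (by omega)
    positivity
  simp only [Complex.zero_re] at h1
  linarith

/-- the function `x ↦ x e^{-x/N}` for `x > 0`, else `0`. -/
noncomputable def gN (N : ℕ) : ℝ → ℂ :=
  Set.indicator (Set.Ioi 0) (fun x : ℝ => (x:ℂ) * Complex.exp (-(((N:ℂ))⁻¹ * x)))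

lemma gN_integrable (N : ℕ) (hN : 1 ≤ N) : Integrable (gN N) := by
  rw [gN, integrable_indicator_iff measurableSet_Ioi]
  exact integrableOn_mul_exp _ (by
    simp only [Complex.inv_re, Complex.natCast_re, Complex.normSq_natCast]
    have : (0:ℝ) < N := by exact_mod_cast Nat.pos_of_ne_zero (by omega)
    positivity)

lemma fourier_gN (N : ℕ) (hN : 1 ≤ N) (ξ : ℝ) :
    𝓕 (gN N) ξ = 1 / (zOf N (-ξ))^2 := by
  have hNpos : (0:ℝ) < N := by exact_mod_cast Nat.pos_of_ne_zero (by omega)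
  have hre : (0:ℝ) < ((N:ℂ)⁻¹ + 2 * (Real.pi:ℂ) * Complex.I * ξ).re := by
    simp [Complex.add_re, Complex.inv_re, Complex.normSq_natCast]
    positivity
  rw [Real.fourier_real_eq]
  have : (fun v : ℝ => 𝐞 (-(v * ξ)) • gN N v) =
      Set.indicator (Set.Ioi 0)
        (fun v : ℝ => (v:ℂ) * Complex.exp (-(((N:ℂ)⁻¹ + 2 * (Real.pi:ℂ) * Complex.I * ξ) * v))) := by
    ext v
    by_cases hv : v ∈ Set.Ioi (0:ℝ)
    · rw [Set.indicator_of_mem hv, gN, Set.indicator_of_mem hv, Circle.smul_def,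
        Real.fourierChar_apply]
      rw [smul_eq_mul, mul_comm, mul_assoc, ← Complex.exp_add]
      congr 1
      push_cast
      ring
    · rw [Set.indicator_of_notMem hv, gN, Set.indicator_of_notMem hv, smul_zero]
  rw [this, MeasureTheory.integral_indicator measurableSet_Ioi,
    integral_mul_exp _ hre]
  have hz : zOf N (-ξ) = (N:ℂ)⁻¹ + 2 * (Real.pi:ℂ) * Complex.I * ξ := by
    simp only [zOf, one_div]
    push_cast
    ring
  rw [hz]

lemma norm_inv_zOf_sq_le (N : ℕ) (hN : 1 ≤ N) (α : ℝ) :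
    ‖1 / (zOf N α)^2‖ ≤ (N:ℝ)^2 * (1 + α^2)⁻¹ := by
  have hNpos : (0:ℝ) < N := by exact_mod_cast Nat.pos_of_ne_zero (by omega)
  have hπ : (1:ℝ) ≤ Real.pi := by linarith [Real.pi_gt_three]
  have h1 : (1:ℝ) ≤ (N:ℝ) := by exact_mod_cast hN
  rw [norm_inv_zOf_sq]
  have h3 : (1/(N:ℝ))^2 ≤ 1 := by
    rw [div_pow, one_pow, div_le_one (by positivity)]
    nlinarith
  have key : (1 + α^2)/(N:ℝ)^2 ≤ (1/N)^2 + (2*Real.pi*α)^2 := by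
    have e1 : (1+α^2)/(N:ℝ)^2 = (1/N)^2 + α^2 * (1/N)^2 := by
      field_simp
    have hp2 : (1:ℝ) ≤ Real.pi^2 := by nlinarith
    have e2 : α^2 * (1/(N:ℝ))^2 ≤ (2*Real.pi*α)^2 := by
      have h4 := mul_le_mul_of_nonneg_right hp2 (sq_nonneg α)
      have h5 := mul_le_mul_of_nonneg_left h3 (sq_nonneg α)
      nlinarith [sq_nonneg α]
    linarith [e1, e2]
  calc ((1/(N:ℝ))^2 + (2 * Real.pi * α)^2)⁻¹ ≤ ((1 + α^2)/(N:ℝ)^2)⁻¹ := by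
        apply inv_anti₀ (by positivity) key
    _ = (N:ℝ)^2 * (1 + α^2)⁻¹ := by
        rw [inv_div]
        ring

lemma fourier_gN_integrable (N : ℕ) (hN : 1 ≤ N) : Integrable (𝓕 (gN N)) := by
  have hfun : 𝓕 (gN N) = fun ξ => 1 / (zOf N (-ξ))^2 := funext (fourier_gN N hN)
  rw [hfun]
  apply (integrable_inv_one_add_sq.const_mul ((N:ℝ)^2)).mono'
  · apply Continuous.aestronglyMeasurable
    apply Continuous.div continuous_const
    · fun_prop [zOf]
    · intro ξ
      exact pow_ne_zero _ (zOf_ne N hN _)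
  · filter_upwards with ξ
    have := norm_inv_zOf_sq_le N hN (-ξ)
    simpa [neg_sq] using this

lemma gN_apply_nat (N n : ℕ) (hn : 1 ≤ n) :
    gN N (n:ℝ) = (((n:ℝ) * Real.exp (-(n:ℝ)/N) : ℝ) : ℂ) := by
  have hmem : (n:ℝ) ∈ Set.Ioi (0:ℝ) := by
    simp only [Set.mem_Ioi]
    exact_mod_cast Nat.pos_of_ne_zero (by omega)
  rw [gN, Set.indicator_of_mem hmem]
  push_cast [Complex.ofReal_exp]
  congr 1
  push_cast
  ring

lemma gN_continuousAt (N n : ℕ) (hn : 1 ≤ n) : ContinuousAt (gN N) (n:ℝ) := by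
  have hmem : Set.Ioi (0:ℝ) ∈ nhds (n:ℝ) := Ioi_mem_nhds (by
    exact_mod_cast Nat.pos_of_ne_zero (by omega))
  have hcont : ContinuousAt (fun x : ℝ => (x:ℂ) * Complex.exp (-(((N:ℂ))⁻¹ * x))) (n:ℝ) := by
    fun_prop
  apply hcont.congr
  filter_upwards [hmem] with x hx
  rw [gN, Set.indicator_of_mem hx]

lemma integral_h (N n : ℕ) (hN : 1 ≤ N) (hn : 1 ≤ n) :
    (∫ α : ℝ, Complex.exp (2 * (Real.pi:ℂ) * Complex.I * (n:ℂ) * (((-α : ℝ)):ℂ)) / (zOf N α)^2)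
      = (((n:ℝ) * Real.exp (-(n:ℝ)/N) : ℝ) : ℂ) := by
  have hinv := (gN_integrable N hN).fourierInv_fourier_eq (fourier_gN_integrable N hN)
    (gN_continuousAt N n hn)
  rw [← gN_apply_nat N n hn]
  rw [← hinv]
  rw [Real.fourierInv_eq']
  rw [← MeasureTheory.integral_neg_eq_self
    (fun α : ℝ => Complex.exp (2 * (Real.pi:ℂ) * Complex.I * (n:ℂ) * (((-α : ℝ)):ℂ)) / (zOf N α)^2)]
  congr 1
  ext v
  rw [fourier_gN N hN]
  rw [smul_eq_mul, div_eq_mul_one_div]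
  congr 2
  · push_cast
    simp [RCLike.inner_apply]
    ring

lemma norm_h (N n : ℕ) (α : ℝ) :
    ‖Complex.exp (2 * (Real.pi:ℂ) * Complex.I * (n:ℂ) * (((-α : ℝ)):ℂ)) / (zOf N α)^2‖
      = ((1/N)^2 + (2 * Real.pi * α)^2)⁻¹ := by
  rw [norm_div, Complex.norm_exp]
  have : (2 * (Real.pi:ℂ) * Complex.I * (n:ℂ) * (((-α : ℝ)):ℂ)).re = 0 := by
    simp [Complex.mul_re, Complex.mul_im]
  rw [this, Real.exp_zero]
  rw [← norm_inv_zOf_sq, norm_div, norm_one]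

lemma h_integrable (N n : ℕ) (hN : 1 ≤ N) :
    Integrable (fun α : ℝ =>
      Complex.exp (2 * (Real.pi:ℂ) * Complex.I * (n:ℂ) * (((-α : ℝ)):ℂ)) / (zOf N α)^2) := by
  apply (integrable_inv_one_add_sq.const_mul ((N:ℝ)^2)).mono'
  · apply Continuous.aestronglyMeasurable
    apply Continuous.div
    · fun_prop
    · fun_prop [zOf]
    · intro α
      exact pow_ne_zero _ (zOf_ne N hN _)
  · filter_upwards with α
    rw [norm_h]
    have := norm_inv_zOf_sq_le N hN α
    rwa [norm_inv_zOf_sq] at this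

lemma intOn_inv_sq : IntegrableOn (fun x : ℝ => (x^2)⁻¹) (Set.Ioi (1/2 : ℝ)) := by
  have h := integrableOn_Ioi_rpow_of_lt (a := (-2:ℝ)) (by norm_num) (c := (1/2:ℝ)) (by norm_num)
  apply h.congr_fun ?_ measurableSet_Ioi
  intro x hx
  have hx0 : (0:ℝ) < x := lt_trans (by norm_num) hx
  show x ^ (-2:ℝ) = (x^2)⁻¹
  rw [Real.rpow_neg hx0.le, Real.rpow_two]

lemma val_inv_sq : ∫ x in Set.Ioi (1/2 : ℝ), (x^2)⁻¹ = 2 := by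
  have h := integral_Ioi_rpow_of_lt (a := (-2:ℝ)) (by norm_num) (c := (1/2:ℝ)) (by norm_num)
  rw [setIntegral_congr_fun measurableSet_Ioi (g := fun x : ℝ => x ^ (-2:ℝ)) ?_, h]
  · norm_num [Real.rpow_neg_one]
  · intro x hx
    have hx0 : (0:ℝ) < x := lt_trans (by norm_num) hx
    show (x^2)⁻¹ = x ^ (-2:ℝ)
    rw [Real.rpow_neg hx0.le, Real.rpow_two]

lemma per_n (N n : ℕ) (hN : 1 ≤ N) (hn : 1 ≤ n) :
    ‖(∫ α in Set.Ioc (-(1/2):ℝ) (1/2),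
        Complex.exp (2 * (Real.pi:ℂ) * Complex.I * (n:ℂ) * (((-α : ℝ)):ℂ)) / (zOf N α)^2)
      - (((n:ℝ) * Real.exp (-(n:ℝ)/N) : ℝ) : ℂ)‖ ≤ 4 := by
  set h : ℝ → ℂ := fun α =>
    Complex.exp (2 * (Real.pi:ℂ) * Complex.I * (n:ℂ) * (((-α : ℝ)):ℂ)) / (zOf N α)^2 with hh
  have hint : Integrable h := h_integrable N n hN
  have hsplit := MeasureTheory.integral_add_compl (measurableSet_Ioc
    (a := (-(1/2):ℝ)) (b := (1/2:ℝ))) hint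
  rw [← integral_h N n hN hn, ← hsplit]
  have : (∫ α in Set.Ioc (-(1/2):ℝ) (1/2), h α) -
      ((∫ α in Set.Ioc (-(1/2):ℝ) (1/2), h α) + ∫ α in (Set.Ioc (-(1/2):ℝ) (1/2))ᶜ, h α)
      = -(∫ α in (Set.Ioc (-(1/2):ℝ) (1/2))ᶜ, h α) := by ring
  rw [this, norm_neg]
  have hcompl : (Set.Ioc (-(1/2):ℝ) (1/2))ᶜ = Set.Iic (-(1/2):ℝ) ∪ Set.Ioi (1/2:ℝ) := by
    ext x
    simp only [Set.mem_compl_iff, Set.mem_Ioc, not_and_or, not_lt, not_le, Set.mem_union,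
      Set.mem_Iic, Set.mem_Ioi]
  rw [hcompl]
  have hdisj : Disjoint (Set.Iic (-(1/2):ℝ)) (Set.Ioi (1/2:ℝ)) :=
    Set.Iic_disjoint_Ioi (by norm_num)
  rw [MeasureTheory.setIntegral_union hdisj measurableSet_Ioi
    (hint.integrableOn) (hint.integrableOn)]
  have hb : ∀ x : ℝ, x ∈ Set.Ioi (1/2:ℝ) → ((1/(N:ℝ))^2 + (2 * Real.pi * x)^2)⁻¹ ≤ (x^2)⁻¹ := by
    intro x hx
    have hx0 : (0:ℝ) < x := lt_trans (by norm_num) hx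
    apply inv_anti₀ (by positivity)
    nlinarith [sq_nonneg (1/(N:ℝ)), mul_le_mul_of_nonneg_right
      (show (1:ℝ) ≤ Real.pi^2 by nlinarith [Real.pi_gt_three]) (sq_nonneg x)]
  have hIoi : ‖∫ α in Set.Ioi (1/2:ℝ), h α‖ ≤ 2 := by
    calc ‖∫ α in Set.Ioi (1/2:ℝ), h α‖ ≤ ∫ α in Set.Ioi (1/2:ℝ), ‖h α‖ :=
          norm_integral_le_integral_norm _
      _ ≤ ∫ α in Set.Ioi (1/2:ℝ), (α^2)⁻¹ := by
          apply setIntegral_mono_on (hint.norm.integrableOn) intOn_inv_sq measurableSet_Ioi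
          intro x hx
          rw [hh, norm_h]
          exact hb x hx
      _ = 2 := val_inv_sq
  have hIic : ‖∫ α in Set.Iic (-(1/2):ℝ), h α‖ ≤ 2 := by
    have hflip : (∫ α in Set.Iic (-(1/2):ℝ), ‖h α‖)
        = ∫ x in Set.Ioi (1/2:ℝ), ‖h (-x)‖ := by
      have := integral_comp_neg_Iic (-(1/2):ℝ) (fun t => ‖h (-t)‖)
      simp only [neg_neg] at this
      rw [← this]
    have hnormneg : ∀ x : ℝ, ‖h (-x)‖ = ((1/(N:ℝ))^2 + (2 * Real.pi * x)^2)⁻¹ := by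
      intro x
      rw [hh, norm_h]
      congr 1
      ring
    calc ‖∫ α in Set.Iic (-(1/2):ℝ), h α‖ ≤ ∫ α in Set.Iic (-(1/2):ℝ), ‖h α‖ :=
          norm_integral_le_integral_norm _
      _ = ∫ x in Set.Ioi (1/2:ℝ), ‖h (-x)‖ := hflip
      _ ≤ ∫ x in Set.Ioi (1/2:ℝ), (x^2)⁻¹ := by
          apply setIntegral_mono_on ?_ intOn_inv_sq measurableSet_Ioi
          · intro x hx
            rw [hnormneg]
            exact hb x hx
          · apply (intOn_inv_sq.mono' ?_ ?_)
            · apply Continuous.aestronglyMeasurable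
              apply Continuous.norm
              apply Continuous.div
              · fun_prop
              · fun_prop [zOf]
              · intro α
                exact pow_ne_zero _ (zOf_ne N hN _)
            · filter_upwards [ae_restrict_mem measurableSet_Ioi] with x hx
              rw [Real.norm_eq_abs, abs_of_nonneg (by rw [hnormneg]; positivity),
                hnormneg]
              exact hb x hx
      _ = 2 := val_inv_sq
  calc ‖(∫ α in Set.Iic (-(1/2):ℝ), h α) + ∫ α in Set.Ioi (1/2:ℝ), h α‖
      ≤ ‖∫ α in Set.Iic (-(1/2):ℝ), h α‖ + ‖∫ α in Set.Ioi (1/2:ℝ), h α‖ := norm_add_le _ _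
    _ ≤ 2 + 2 := add_le_add hIic hIoi
    _ = 4 := by norm_num

theorem I1_evaluation :
    ∃ C : ℝ, 0 < C ∧ ∀ N : ℕ, 2 ≤ N → ∀ y : ℕ, 1 ≤ y → y ≤ N →
      ‖(∫ α in (-(1/2 : ℝ))..(1/2 : ℝ), T y (-α) / zOf N α ^ 2) -
          ((∑ n ∈ Finset.Icc 1 y, (n : ℝ) * Real.exp (-(n : ℝ) / N) : ℝ) : ℂ)‖
        ≤ C * y := by
  refine ⟨4, by norm_num, fun N hN2 y hy1 hyN => ?_⟩
  have hN : 1 ≤ N := by omega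
  rw [intervalIntegral.integral_of_le (by norm_num : (-(1/2):ℝ) ≤ 1/2)]
  have hsum : ∀ α : ℝ, T y (-α) / zOf N α ^ 2 =
      ∑ n ∈ Finset.Icc 1 y,
        Complex.exp (2 * (Real.pi:ℂ) * Complex.I * (n:ℂ) * (((-α : ℝ)):ℂ)) / (zOf N α)^2 := by
    intro α
    rw [T, Finset.sum_div]
  rw [MeasureTheory.integral_congr_ae (Filter.Eventually.of_forall hsum)]
  rw [MeasureTheory.integral_finset_sum _ (fun n _ => (h_integrable N n hN).integrableOn)]
  rw [Complex.ofReal_sum]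
  rw [← Finset.sum_sub_distrib]
  calc ‖∑ n ∈ Finset.Icc 1 y,
        ((∫ α in Set.Ioc (-(1/2):ℝ) (1/2),
          Complex.exp (2 * (Real.pi:ℂ) * Complex.I * (n:ℂ) * (((-α : ℝ)):ℂ)) / (zOf N α)^2)
          - (((n:ℝ) * Real.exp (-(n:ℝ)/N) : ℝ) : ℂ))‖
      ≤ ∑ n ∈ Finset.Icc 1 y, (4:ℝ) := by
        apply norm_sum_le_of_le
        intro n hn
        exact per_n N n hN (by simp [Finset.mem_Icc] at hn; omega)
    _ = 4 * y := by
        rw [Finset.sum_const, Nat.card_Icc]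
        simp [nsmul_eq_mul]
        ring
end
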